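/- Let Δ be the Sierpiński triangle of side 1, and suppose ε > 0, 0 < α < 1, c > 0, and f : Δ → ℝ is Lipschitz with constant M and c⁻-Hölder-α on Δ. Then there exists N ∈ ℕ such that for every fixed n ≥ N the following holds: if g : Δ → ℝ satisfies that for every T ∈ τ_n the restriction of g to T ∩ Δ is (c/8)-Hölder-α, and g(x) = f(x) for every x ∈ 𝐕_n, then ‖g − f‖_∞ < ε and g is c⁻-Hölder-α on Δ. -/

import Mathlib

noncomputable section

/-- The plane `ℝ²` with the Euclidean metric. -/
abbrev E2 := EuclideanSpace ℝ (Fin 2)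

/-- The point `(x, y)` of the Euclidean plane. -/
def pt (x y : ℝ) : E2 := (WithLp.equiv 2 (Fin 2 → ℝ)).symm ![x, y]

/-- The three vertices of an equilateral triangle of side length 1. -/
def vtx : Fin 3 → E2 := ![pt 0 0, pt 1 0, pt (1 / 2) (Real.sqrt 3 / 2)]

/-- The homothety of ratio 1/2 centered at the `i`-th vertex. -/
def hmap (i : Fin 3) : E2 → E2 := fun x => AffineMap.homothety (vtx i) (1 / 2 : ℝ) x

/-- Composition of the homotheties along a word; words of length `n` index the
triangles of `τ_n`. -/
def compMap : List (Fin 3) → E2 → E2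
  | [], x => x
  | i :: ws, x => hmap i (compMap ws x)

/-- The initial closed equilateral triangle `Δ₀` of side length 1. -/
def Δ0 : Set E2 := convexHull ℝ (Set.range vtx)

/-- The Sierpiński triangle of side length 1. -/
def Sierp : Set E2 :=
  ⋂ n : ℕ, ⋃ (ws : List (Fin 3)) (_ : ws.length = n), compMap ws '' Δ0

/-- `f` is `c`-Hölder-α on `F`. -/
def HolderCond (c α : ℝ) (F : Set E2) (f : E2 → ℝ) : Prop :=
  ∀ x ∈ F, ∀ y ∈ F, |f x - f y| ≤ c * dist x y ^ α

/-! ### Coordinate helpers -/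

def rt3 : ℝ := Real.sqrt 3

lemma rt3_sq : rt3 ^ 2 = 3 := Real.sq_sqrt (by norm_num)

lemma rt3_nn : (0:ℝ) ≤ rt3 := Real.sqrt_nonneg 3

@[simp] lemma pt_c0 (x y : ℝ) : (pt x y) 0 = x := rfl

@[simp] lemma pt_c1 (x y : ℝ) : (pt x y) 1 = y := rfl

@[simp] lemma vtx0_0 : vtx 0 0 = 0 := rfl
@[simp] lemma vtx0_1 : vtx 0 1 = 0 := rfl
@[simp] lemma vtx1_0 : vtx 1 0 = 1 := rfl
@[simp] lemma vtx1_1 : vtx 1 1 = 0 := rfl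
@[simp] lemma vtx2_0 : vtx 2 0 = 1/2 := rfl
@[simp] lemma vtx2_1 : vtx 2 1 = rt3/2 := rfl

lemma e2_ext {a b : E2} (h0 : a 0 = b 0) (h1 : a 1 = b 1) : a = b := by
  apply PiLp.ext; intro k; fin_cases k <;> assumption

lemma dist_sq (a b : E2) : dist a b ^ 2 = (a 0 - b 0)^2 + (a 1 - b 1)^2 := by
  rw [EuclideanSpace.dist_eq, Real.sq_sqrt (by positivity)]
  simp [Fin.sum_univ_two, Real.dist_eq, sq_abs]

lemma dist_eq_of_sq {a b : E2} {r : ℝ} (hr : 0 ≤ r) (h : dist a b ^ 2 = r ^ 2) :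
    dist a b = r := by
  have h2 : (dist a b - r) * (dist a b + r) = 0 := by linear_combination h
  rcases mul_eq_zero.1 h2 with h3 | h3
  · linarith
  · have := dist_nonneg (x := a) (y := b); linarith

lemma hmap_c (i : Fin 3) (z : E2) (k : Fin 2) : (hmap i z) k = (vtx i k + z k)/2 := by
  show (AffineMap.homothety (vtx i) (1/2:ℝ) z) k = _
  rw [AffineMap.homothety_apply]
  show ((1/2:ℝ) • (z - vtx i) + vtx i) k = _
  simp only [PiLp.add_apply, PiLp.smul_apply, PiLp.sub_apply, smul_eq_mul]
  ring

lemma dist_hmap (i : Fin 3) (a b : E2) : dist (hmap i a) (hmap i b) = dist a b / 2 := by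
  apply dist_eq_of_sq (by positivity)
  rw [div_pow, dist_sq, dist_sq, hmap_c, hmap_c, hmap_c, hmap_c]
  ring

lemma hmap_inj (i : Fin 3) : Function.Injective (hmap i) := by
  intro a b h
  have := dist_hmap i a b
  rw [h, dist_self] at this
  have : dist a b = 0 := by linarith
  exact dist_eq_zero.1 this

lemma hmap_vtx_same (j : Fin 3) : hmap j (vtx j) = vtx j :=
  AffineMap.homothety_apply_same _ _

lemma compMap_cons (i : Fin 3) (ws : List (Fin 3)) (x : E2) :
    compMap (i :: ws) x = hmap i (compMap ws x) := rfl

lemma compMap_append (u v : List (Fin 3)) (x : E2) :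
    compMap (u ++ v) x = compMap u (compMap v x) := by
  induction u with
  | nil => rfl
  | cons i u ih => rw [List.cons_append, compMap_cons, compMap_cons, ih]

lemma dist_compMap (ws : List (Fin 3)) (a b : E2) :
    dist (compMap ws a) (compMap ws b) = dist a b / 2 ^ ws.length := by
  induction ws with
  | nil => simp [compMap]
  | cons i ws ih =>
      rw [compMap_cons, compMap_cons, dist_hmap, ih, List.length_cons]
      rw [pow_succ]; ring

lemma range_vtx : Set.range vtx = {vtx 0, vtx 1, vtx 2} := by
  ext z
  constructor
  · rintro ⟨i, rfl⟩; fin_cases i <;> simp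
  · rintro (rfl | rfl | rfl) <;> exact Set.mem_range_self _

lemma vtx_mem_Δ0 (i : Fin 3) : vtx i ∈ Δ0 :=
  subset_convexHull ℝ _ (Set.mem_range_self i)

lemma convex_Δ0 : Convex ℝ Δ0 := convex_convexHull ℝ _

lemma hmapA (i : Fin 3) :
    hmap i '' Δ0 = convexHull ℝ {hmap i (vtx 0), hmap i (vtx 1), hmap i (vtx 2)} := by
  have h1 : hmap i '' Δ0
      = (AffineMap.homothety (vtx i) (1/2:ℝ)) '' (convexHull ℝ (Set.range vtx)) := rfl
  rw [h1, AffineMap.image_convexHull, range_vtx]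
  congr 1
  rw [Set.image_insert_eq, Set.image_insert_eq, Set.image_singleton]
  rfl

lemma hmap_vtx_mem (i j : Fin 3) : hmap i (vtx j) ∈ Δ0 := by
  have h := convex_Δ0 (vtx_mem_Δ0 i) (vtx_mem_Δ0 j)
    (by norm_num : (0:ℝ) ≤ 1/2) (by norm_num : (0:ℝ) ≤ 1/2) (by norm_num)
  have e : hmap i (vtx j) = (1/2:ℝ) • vtx i + (1/2:ℝ) • vtx j := by
    apply e2_ext <;>
      (rw [hmap_c]; simp only [PiLp.add_apply, PiLp.smul_apply, smul_eq_mul]; ring)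
  rw [e]; exact h

lemma hmapD0 (i : Fin 3) : hmap i '' Δ0 ⊆ Δ0 := by
  rw [hmapA]
  apply convexHull_min _ convex_Δ0
  rintro z (rfl | rfl | rfl) <;> exact hmap_vtx_mem _ _

lemma compMap_mem_Δ0 (ws : List (Fin 3)) {z : E2} (hz : z ∈ Δ0) : compMap ws z ∈ Δ0 := by
  induction ws with
  | nil => exact hz
  | cons i ws ih => exact hmapD0 i ⟨_, ih, rfl⟩

lemma hull3_le {A B C : E2} {u v r : ℝ}
    (hA : u * A 0 + v * A 1 ≤ r) (hB : u * B 0 + v * B 1 ≤ r) (hC : u * C 0 + v * C 1 ≤ r) :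
    ∀ z ∈ convexHull ℝ ({A, B, C} : Set E2), u * z 0 + v * z 1 ≤ r := by
  have hlin : IsLinearMap ℝ (fun z : E2 => u * z 0 + v * z 1) := by
    constructor
    · intro p q; simp only [PiLp.add_apply]; ring
    · intro c p; simp only [PiLp.smul_apply, smul_eq_mul]; ring
  intro z hz
  exact convexHull_min (by rintro w (rfl | rfl | rfl) <;> assumption)
    (convex_halfSpace_le hlin r) hz

lemma dist_le_one_of_sq {a b : E2} (h : dist a b ^ 2 ≤ 1) : dist a b ≤ 1 := by
  nlinarith [dist_nonneg (x := a) (y := b)]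

lemma dist_vtx_le (k i : Fin 3) : dist (vtx k) (vtx i) ≤ 1 := by
  apply dist_le_one_of_sq
  rw [dist_sq]
  fin_cases k <;> fin_cases i <;> simp <;> nlinarith [rt3_sq, rt3_nn]

lemma dist_vtx_eq {i j : Fin 3} (hij : i ≠ j) : dist (vtx i) (vtx j) = 1 := by
  apply dist_eq_of_sq (by norm_num)
  rw [dist_sq]
  fin_cases i <;> fin_cases j <;> simp_all <;> nlinarith [rt3_sq, rt3_nn]

lemma diam_Δ0 : ∀ a ∈ Δ0, ∀ b ∈ Δ0, dist a b ≤ 1 := by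
  have h1 : ∀ i : Fin 3, ∀ b ∈ Δ0, dist (vtx i) b ≤ 1 := by
    intro i b hb
    have hsub : Δ0 ⊆ Metric.closedBall (vtx i) 1 := by
      apply convexHull_min _ (convex_closedBall _ _)
      rintro w ⟨k, rfl⟩
      rw [Metric.mem_closedBall]
      exact dist_vtx_le k i
    have := hsub hb
    rw [Metric.mem_closedBall] at this
    rwa [dist_comm]
  intro a ha b hb
  have hsub : Δ0 ⊆ Metric.closedBall a 1 := by
    apply convexHull_min _ (convex_closedBall _ _)
    rintro w ⟨k, rfl⟩
    rw [Metric.mem_closedBall]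
    exact h1 k a ha
  have := hsub hb
  rwa [Metric.mem_closedBall, dist_comm] at this


/-! ### The cone lemma -/

lemma coneCore {r p s q t : ℝ} (hr : r ^ 2 = 3) (hs : 0 ≤ s) (ht : 0 ≤ t)
    (hp : s ≤ r * p) (hq : t ≤ r * q) :
    3 * (p ^ 2 + s ^ 2) ≤ 4 * ((p + q) ^ 2 + (s - t) ^ 2) := by
  have key : 3 * (4 * ((p + q) ^ 2 + (s - t) ^ 2) - 3 * (p ^ 2 + s ^ 2)) =
      (r * p - s) ^ 2 + 2 * s * (r * p - s) + 8 * t * (r * p - s) + 4 * (s - 2 * t) ^ 2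
        + 4 * (r * q - t) ^ 2 + 8 * (r * p) * (r * q - t) + 8 * t * (r * q - t)
        + (r ^ 2 - 3) * (-(p ^ 2) - 8 * p * q - 4 * q ^ 2) := by ring
  rw [hr] at key
  have h1 : 0 ≤ (r * p - s) ^ 2 := sq_nonneg _
  have h2 : 0 ≤ s * (r * p - s) := mul_nonneg hs (by linarith)
  have h3 : 0 ≤ t * (r * p - s) := mul_nonneg ht (by linarith)
  have h4 : 0 ≤ (s - 2 * t) ^ 2 := sq_nonneg _
  have h5 : 0 ≤ (r * q - t) ^ 2 := sq_nonneg _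
  have h6 : 0 ≤ (r * p) * (r * q - t) := mul_nonneg (le_trans hs hp) (by linarith)
  have h7 : 0 ≤ t * (r * q - t) := mul_nonneg ht (by linarith)
  nlinarith [key, h1, h2, h3, h4, h5, h6, h7]

lemma hmid (i j : Fin 3) : hmap i (vtx j) = hmap j (vtx i) := by
  apply e2_ext <;> (rw [hmap_c, hmap_c]; ring)

lemma coneP01 : ∀ a ∈ hmap 0 '' Δ0, ∀ b ∈ hmap 1 '' Δ0,
    3 * dist a (hmap 0 (vtx 1)) ^ 2 ≤ 4 * dist a b ^ 2 ∧
    3 * dist b (hmap 0 (vtx 1)) ^ 2 ≤ 4 * dist a b ^ 2 := by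
  intro a ha b hb
  rw [hmapA] at ha hb
  have ha1 : (0:ℝ) * a 0 + (-1) * a 1 ≤ 0 :=
    hull3_le (by simp [hmap_c]) (by simp [hmap_c]) (by simp [hmap_c]; try linarith [rt3_nn]) a ha
  have ha2 : rt3 * a 0 + 1 * a 1 ≤ rt3/2 :=
    hull3_le (by simp [hmap_c]; try linarith [rt3_nn]) (by simp [hmap_c]; try linarith [rt3_nn])
      (by simp [hmap_c]; try linarith [rt3_nn]) a ha
  have hb1 : (0:ℝ) * b 0 + (-1) * b 1 ≤ 0 :=
    hull3_le (by simp [hmap_c]) (by simp [hmap_c]) (by simp [hmap_c]; try linarith [rt3_nn]) b hb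
  have hb2 : (-rt3) * b 0 + 1 * b 1 ≤ -(rt3/2) :=
    hull3_le (by simp [hmap_c]; try linarith [rt3_nn]) (by simp [hmap_c]; try linarith [rt3_nn])
      (by simp [hmap_c]; try linarith [rt3_nn]) b hb
  set p : ℝ := 1/2 - a 0 with hpdef
  set s : ℝ := a 1 with hsdef
  set q : ℝ := b 0 - 1/2 with hqdef
  set t : ℝ := b 1 with htdef
  have hs : 0 ≤ s := by simp [hsdef]; linarith
  have ht : 0 ≤ t := by simp [htdef]; linarith
  have hp : s ≤ rt3 * p := by rw [hpdef, hsdef]; nlinarith [ha2]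
  have hq : t ≤ rt3 * q := by rw [hqdef, htdef]; nlinarith [hb2]
  have hcore1 := coneCore rt3_sq hs ht hp hq
  have hcore2 := coneCore rt3_sq ht hs hq hp
  constructor
  · rw [dist_sq, dist_sq, hmap_c, hmap_c]
    simp only [vtx0_0, vtx0_1, vtx1_0, vtx1_1]
    norm_num
    linear_combination hcore1
  · rw [dist_sq, dist_sq, hmap_c, hmap_c]
    simp only [vtx0_0, vtx0_1, vtx1_0, vtx1_1]
    norm_num
    linear_combination hcore2


lemma coneP02 : ∀ a ∈ hmap 0 '' Δ0, ∀ b ∈ hmap 2 '' Δ0,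
    3 * dist a (hmap 0 (vtx 2)) ^ 2 ≤ 4 * dist a b ^ 2 ∧
    3 * dist b (hmap 0 (vtx 2)) ^ 2 ≤ 4 * dist a b ^ 2 := by
  intro a ha b hb
  rw [hmapA] at ha hb
  have ha1 : (-rt3) * a 0 + 1 * a 1 ≤ 0 :=
    hull3_le (by simp [hmap_c]) (by simp [hmap_c]; try linarith [rt3_nn])
      (by simp [hmap_c]; try linarith [rt3_nn]) a ha
  have ha2 : rt3 * a 0 + 1 * a 1 ≤ rt3/2 :=
    hull3_le (by simp [hmap_c]; try linarith [rt3_nn]) (by simp [hmap_c]; try linarith [rt3_nn])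
      (by simp [hmap_c]; try linarith [rt3_nn]) a ha
  have hb1 : (0:ℝ) * b 0 + (-1) * b 1 ≤ -(rt3/4) :=
    hull3_le (by simp [hmap_c]; try linarith [rt3_nn]) (by simp [hmap_c]; try linarith [rt3_nn])
      (by simp [hmap_c]; try linarith [rt3_nn]) b hb
  have hb2 : (-rt3) * b 0 + 1 * b 1 ≤ 0 :=
    hull3_le (by simp [hmap_c]; try linarith [rt3_nn]) (by simp [hmap_c]; try linarith [rt3_nn])
      (by simp [hmap_c]; try linarith [rt3_nn]) b hb
  have h3a : rt3 ^ 2 * a 1 = 3 * a 1 := by rw [rt3_sq]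
  have h3b : rt3 ^ 2 * b 1 = 3 * b 1 := by rw [rt3_sq]
  set p : ℝ := 1/2 - a 0/2 - rt3 * a 1/2 with hpdef
  set s : ℝ := (rt3 * a 0 - a 1)/2 with hsdef
  set q : ℝ := b 0/2 + rt3 * b 1/2 - 1/2 with hqdef
  set t : ℝ := (rt3 * b 0 - b 1)/2 with htdef
  have hs : 0 ≤ s := by rw [hsdef]; linarith
  have ht : 0 ≤ t := by rw [htdef]; linarith
  have hp : s ≤ rt3 * p := by rw [hpdef, hsdef]; nlinarith [ha2, h3a]
  have hq : t ≤ rt3 * q := by rw [hqdef, htdef]; nlinarith [hb1, h3b]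
  have hcore1 := coneCore rt3_sq hs ht hp hq
  have hcore2 := coneCore rt3_sq ht hs hq hp
  constructor
  · rw [dist_sq, dist_sq, hmap_c, hmap_c]
    simp only [vtx0_0, vtx0_1, vtx2_0, vtx2_1]
    rw [hpdef, hsdef, hqdef, htdef] at hcore1
    linear_combination hcore1 + ((a 0 - b 0)^2 + (a 1 - b 1)^2 - (3/4)*(a 0^2 + a 1^2) + 3/16) * rt3_sq
  · rw [dist_sq, dist_sq, hmap_c, hmap_c]
    simp only [vtx0_0, vtx0_1, vtx2_0, vtx2_1]
    rw [hpdef, hsdef, hqdef, htdef] at hcore2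
    linear_combination hcore2 + ((a 0 - b 0)^2 + (a 1 - b 1)^2 - (3/4)*(b 0^2 + b 1^2) + 3/16) * rt3_sq

lemma coneP12 : ∀ a ∈ hmap 1 '' Δ0, ∀ b ∈ hmap 2 '' Δ0,
    3 * dist a (hmap 1 (vtx 2)) ^ 2 ≤ 4 * dist a b ^ 2 ∧
    3 * dist b (hmap 1 (vtx 2)) ^ 2 ≤ 4 * dist a b ^ 2 := by
  intro a ha b hb
  rw [hmapA] at ha hb
  have ha1 : rt3 * a 0 + 1 * a 1 ≤ rt3 :=
    hull3_le (by simp [hmap_c]; try linarith [rt3_nn]) (by simp [hmap_c]; try linarith [rt3_nn])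
      (by simp [hmap_c]; try linarith [rt3_nn]) a ha
  have ha2 : (-rt3) * a 0 + 1 * a 1 ≤ -(rt3/2) :=
    hull3_le (by simp [hmap_c]; try linarith [rt3_nn]) (by simp [hmap_c]; try linarith [rt3_nn])
      (by simp [hmap_c]; try linarith [rt3_nn]) a ha
  have hb1 : rt3 * b 0 + 1 * b 1 ≤ rt3 :=
    hull3_le (by simp [hmap_c]; try linarith [rt3_nn]) (by simp [hmap_c]; try linarith [rt3_nn])
      (by simp [hmap_c]; try linarith [rt3_nn]) b hb
  have hb2 : (0:ℝ) * b 0 + (-1) * b 1 ≤ -(rt3/4) :=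
    hull3_le (by simp [hmap_c]; try linarith [rt3_nn]) (by simp [hmap_c]; try linarith [rt3_nn])
      (by simp [hmap_c]; try linarith [rt3_nn]) b hb
  have h3a : rt3 ^ 2 * a 1 = 3 * a 1 := by rw [rt3_sq]
  have h3b : rt3 ^ 2 * b 1 = 3 * b 1 := by rw [rt3_sq]
  set p : ℝ := (a 0 - rt3 * a 1)/2 with hpdef
  set s : ℝ := (rt3 - rt3 * a 0 - a 1)/2 with hsdef
  set q : ℝ := (rt3 * b 1 - b 0)/2 with hqdef
  set t : ℝ := (rt3 - rt3 * b 0 - b 1)/2 with htdef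
  have hs : 0 ≤ s := by rw [hsdef]; linarith
  have ht : 0 ≤ t := by rw [htdef]; linarith
  have hp : s ≤ rt3 * p := by rw [hpdef, hsdef]; nlinarith [ha2, h3a]
  have hq : t ≤ rt3 * q := by rw [hqdef, htdef]; nlinarith [hb2, h3b]
  have hcore1 := coneCore rt3_sq hs ht hp hq
  have hcore2 := coneCore rt3_sq ht hs hq hp
  constructor
  · rw [dist_sq, dist_sq, hmap_c, hmap_c]
    simp only [vtx1_0, vtx1_1, vtx2_0, vtx2_1]
    rw [hpdef, hsdef, hqdef, htdef] at hcore1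
    linear_combination hcore1 + ((a 0 - b 0)^2 + (a 1 - b 1)^2 - (3/4)*(a 0^2 + a 1^2) + (3/2)*a 0 - 9/16) * rt3_sq
  · rw [dist_sq, dist_sq, hmap_c, hmap_c]
    simp only [vtx1_0, vtx1_1, vtx2_0, vtx2_1]
    rw [hpdef, hsdef, hqdef, htdef] at hcore2
    linear_combination hcore2 + ((a 0 - b 0)^2 + (a 1 - b 1)^2 - (3/4)*(b 0^2 + b 1^2) + (3/2)*b 0 - 9/16) * rt3_sq

lemma coneP {i j : Fin 3} (hij : i ≠ j) {a b : E2}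
    (ha : a ∈ hmap i '' Δ0) (hb : b ∈ hmap j '' Δ0) :
    3 * dist a (hmap i (vtx j)) ^ 2 ≤ 4 * dist a b ^ 2 ∧
    3 * dist b (hmap i (vtx j)) ^ 2 ≤ 4 * dist a b ^ 2 := by
  have hcomm : ∀ u v : E2, dist u v ^ 2 = dist v u ^ 2 := by
    intro u v; rw [dist_comm]
  fin_cases i <;> fin_cases j
  · exact absurd rfl hij
  · exact coneP01 a ha b hb
  · exact coneP02 a ha b hb
  · obtain ⟨h1, h2⟩ := coneP01 b hb a ha
    constructor
    · show 3 * dist a (hmap 1 (vtx 0)) ^ 2 ≤ 4 * dist a b ^ 2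
      rw [hmid 1 0, hcomm a b]; exact h2
    · show 3 * dist b (hmap 1 (vtx 0)) ^ 2 ≤ 4 * dist a b ^ 2
      rw [hmid 1 0, hcomm a b]; exact h1
  · exact absurd rfl hij
  · exact coneP12 a ha b hb
  · obtain ⟨h1, h2⟩ := coneP02 b hb a ha
    constructor
    · show 3 * dist a (hmap 2 (vtx 0)) ^ 2 ≤ 4 * dist a b ^ 2
      rw [hmid 2 0, hcomm a b]; exact h2
    · show 3 * dist b (hmap 2 (vtx 0)) ^ 2 ≤ 4 * dist a b ^ 2
      rw [hmid 2 0, hcomm a b]; exact h1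
  · obtain ⟨h1, h2⟩ := coneP12 b hb a ha
    constructor
    · show 3 * dist a (hmap 2 (vtx 1)) ^ 2 ≤ 4 * dist a b ^ 2
      rw [hmid 2 1, hcomm a b]; exact h2
    · show 3 * dist b (hmap 2 (vtx 1)) ^ 2 ≤ 4 * dist a b ^ 2
      rw [hmid 2 1, hcomm a b]; exact h1
  · exact absurd rfl hij


/-! ### Structure of the Sierpiński set -/

def SL (m : ℕ) : Set E2 := ⋃ (ws : List (Fin 3)) (_ : ws.length = m), compMap ws '' Δ0

lemma mem_Sierp_iff {x : E2} : x ∈ Sierp ↔ ∀ m, x ∈ SL m := by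
  simp [Sierp, SL, Set.mem_iInter]

lemma mem_SL {x : E2} {m : ℕ} :
    x ∈ SL m ↔ ∃ ws : List (Fin 3), ws.length = m ∧ x ∈ compMap ws '' Δ0 := by
  simp [SL, Set.mem_iUnion]

lemma SL_zero : SL 0 = Δ0 := by
  ext x
  rw [mem_SL]
  constructor
  · rintro ⟨ws, hlen, hmem⟩
    rw [List.length_eq_zero_iff] at hlen
    subst hlen
    obtain ⟨z, hz, rfl⟩ := hmem
    exact hz
  · intro hx
    exact ⟨[], rfl, ⟨x, hx, rfl⟩⟩

lemma mem_SL_succ {x : E2} {m : ℕ} :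
    x ∈ SL (m + 1) ↔ ∃ i, x ∈ hmap i '' SL m := by
  constructor
  · intro hx
    obtain ⟨ws, hlen, hmem⟩ := mem_SL.1 hx
    cases ws with
    | nil => simp at hlen
    | cons i rest =>
        refine ⟨i, ?_⟩
        obtain ⟨z, hz, rfl⟩ := hmem
        exact ⟨compMap rest z, mem_SL.2 ⟨rest, by simpa using hlen, ⟨z, hz, rfl⟩⟩, rfl⟩
  · rintro ⟨i, z, hz, rfl⟩
    obtain ⟨ws, hlen, w, hw, rfl⟩ := mem_SL.1 hz
    exact mem_SL.2 ⟨i :: ws, by simp [hlen], ⟨w, hw, rfl⟩⟩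

lemma SL_succ_sub (m : ℕ) : SL (m + 1) ⊆ SL m := by
  intro x hx
  obtain ⟨ws, hlen, hmem⟩ := mem_SL.1 hx
  rcases List.eq_nil_or_concat ws with rfl | ⟨u, l, rfl⟩
  · simp at hlen
  · refine mem_SL.2 ⟨u, by simpa using hlen, ?_⟩
    obtain ⟨w, hw, rfl⟩ := hmem
    rw [List.concat_eq_append, compMap_append]
    exact ⟨compMap [l] w, hmapD0 l ⟨w, hw, rfl⟩, rfl⟩

lemma SL_anti : ∀ {m m' : ℕ}, m ≤ m' → SL m' ⊆ SL m := by
  intro m m' h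
  induction h with
  | refl => exact le_refl _
  | step h ih => exact fun x hx => ih (SL_succ_sub _ hx)

lemma Sierp_sub_Δ0 : Sierp ⊆ Δ0 := by
  intro x hx
  have h := mem_Sierp_iff.1 hx 0
  rwa [SL_zero] at h

lemma hmap_mem_Sierp (i : Fin 3) {x : E2} (hx : x ∈ Sierp) : hmap i x ∈ Sierp := by
  rw [mem_Sierp_iff] at hx ⊢
  intro m
  cases m with
  | zero => rw [SL_zero]; exact hmapD0 i ⟨x, by rw [← SL_zero]; exact hx 0, rfl⟩
  | succ m => exact mem_SL_succ.2 ⟨i, ⟨x, hx m, rfl⟩⟩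

lemma vtx_mem_Sierp (j : Fin 3) : vtx j ∈ Sierp := by
  rw [mem_Sierp_iff]
  intro m
  induction m with
  | zero => rw [SL_zero]; exact vtx_mem_Δ0 j
  | succ m ih => exact mem_SL_succ.2 ⟨j, ⟨vtx j, ih, hmap_vtx_same j⟩⟩

lemma compMap_mem_Sierp (ws : List (Fin 3)) {x : E2} (hx : x ∈ Sierp) :
    compMap ws x ∈ Sierp := by
  induction ws with
  | nil => exact hx
  | cons i ws ih => exact hmap_mem_Sierp i ih

def hinv (i : Fin 3) (x : E2) : E2 := vtx i + (2:ℝ) • (x - vtx i)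

lemma hinv_hmap (i : Fin 3) (x : E2) : hinv i (hmap i x) = x := by
  apply e2_ext <;>
    (simp only [hinv, PiLp.add_apply, PiLp.smul_apply, PiLp.sub_apply, smul_eq_mul, hmap_c]; ring)

lemma peel {x : E2} (hx : x ∈ Sierp) : ∃ i z, z ∈ Sierp ∧ x = hmap i z := by
  by_contra hcon
  push_neg at hcon
  have key : ∀ i : Fin 3, ∃ m, x ∉ hmap i '' SL m := by
    intro i
    by_contra hc
    push_neg at hc
    have hz : hinv i x ∈ Sierp := by
      rw [mem_Sierp_iff]
      intro m
      obtain ⟨z, hz, hzx⟩ := hc m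
      have : hinv i x = z := by rw [← hzx, hinv_hmap]
      rwa [this]
    apply hcon i (hinv i x) hz
    obtain ⟨z, _, hzx⟩ := hc 0
    rw [← hzx, hinv_hmap, hzx]
  choose mm hmm using key
  set m0 := max (mm 0) (max (mm 1) (mm 2)) with hm0
  have hx1 : x ∈ SL (m0 + 1) := mem_Sierp_iff.1 hx _
  obtain ⟨i, hxi⟩ := mem_SL_succ.1 hx1
  apply hmm i
  apply Set.image_mono (f := hmap i) (SL_anti (le_trans ?_ (le_refl m0))) hxi
  fin_cases i
  · exact le_max_left _ _
  · exact le_trans (le_max_left _ _) (le_max_right _ _)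
  · exact le_trans (le_max_right _ _) (le_max_right _ _)

lemma addr (k : ℕ) : ∀ {x : E2}, x ∈ Sierp →
    ∃ (ws : List (Fin 3)) (z : E2), ws.length = k ∧ z ∈ Sierp ∧ x = compMap ws z := by
  induction k with
  | zero => exact fun hx => ⟨[], _, rfl, hx, rfl⟩
  | succ k ih =>
      intro x hx
      obtain ⟨i, z, hz, rfl⟩ := peel hx
      obtain ⟨ws, z', hlen, hz', rfl⟩ := ih hz
      exact ⟨i :: ws, z', by simp [hlen], hz', rfl⟩

lemma compMap_replicate (k : ℕ) (j : Fin 3) :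
    compMap (List.replicate k j) (vtx j) = vtx j := by
  induction k with
  | zero => rfl
  | succ k ih => rw [List.replicate_succ, compMap_cons, ih, hmap_vtx_same]

lemma lemD (j : Fin 3) : ∀ ws : List (Fin 3), vtx j ∉ compMap ws '' Δ0 →
    ∀ z ∈ compMap ws '' Δ0, (1/2:ℝ) ^ ws.length ≤ dist z (vtx j) := by
  intro ws
  induction ws with
  | nil => exact fun h => absurd ⟨vtx j, vtx_mem_Δ0 j, rfl⟩ h
  | cons l rest ih =>
      intro hnot z hz
      obtain ⟨w, hw, rfl⟩ := hz
      rw [compMap_cons]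
      by_cases hlj : l = j
      · subst hlj
        have hnot' : vtx l ∉ compMap rest '' Δ0 := by
          intro hmem
          apply hnot
          obtain ⟨w0, hw0, hw0e⟩ := hmem
          exact ⟨w0, hw0, by rw [compMap_cons, hw0e, hmap_vtx_same]⟩
        have e : dist (hmap l (compMap rest w)) (vtx l)
            = dist (compMap rest w) (vtx l) / 2 := by
          conv_lhs => rw [← hmap_vtx_same l]
          exact dist_hmap l _ _
        rw [e, List.length_cons, pow_succ]
        have := ih hnot' (compMap rest w) ⟨w, hw, rfl⟩
        linarith
      · have h1 : dist (hmap l (compMap rest w)) (vtx l) ≤ 1/2 := by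
          have e : dist (hmap l (compMap rest w)) (vtx l)
              = dist (compMap rest w) (vtx l) / 2 := by
            conv_lhs => rw [← hmap_vtx_same l]
            exact dist_hmap l _ _
          rw [e]
          have := diam_Δ0 _ (compMap_mem_Δ0 rest hw) _ (vtx_mem_Δ0 l)
          linarith
        have h2 : dist (vtx l) (vtx j) = 1 := dist_vtx_eq hlj
        have h3 : dist (vtx l) (vtx j) ≤ dist (vtx l) (hmap l (compMap rest w))
            + dist (hmap l (compMap rest w)) (vtx j) := dist_triangle _ _ _
        have h1' : dist (vtx l) (hmap l (compMap rest w)) ≤ 1/2 := by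
          rw [dist_comm]; exact h1
        have h4 : (1/2:ℝ) ≤ dist (hmap l (compMap rest w)) (vtx j) := by
          rw [h2] at h3; linarith
        calc (1/2:ℝ) ^ (l :: rest).length ≤ 1/2 := by
              rw [List.length_cons]
              apply pow_le_of_le_one (by norm_num) (by norm_num)
              omega
          _ ≤ _ := h4

lemma list_split : ∀ u v : List (Fin 3), u.length = v.length →
    u = v ∨ ∃ (w : List (Fin 3)) (i j : Fin 3) (ru rv : List (Fin 3)),
      i ≠ j ∧ u = w ++ i :: ru ∧ v = w ++ j :: rv := by
  intro u
  induction u with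
  | nil =>
      intro v hv
      left
      have : v.length = 0 := by simpa using hv.symm
      exact (List.length_eq_zero_iff.1 this).symm
  | cons a u ih =>
      intro v hv
      cases v with
      | nil => simp at hv
      | cons b v' =>
          by_cases hab : a = b
          · subst hab
            rcases ih v' (by simpa using hv) with rfl | ⟨w, i, j, ru, rv, hij, h1, h2⟩
            · left; rfl
            · right
              exact ⟨a :: w, i, j, ru, rv, hij, by simp [h1], by simp [h2]⟩
          · right
            exact ⟨[], a, b, u, v', hab, rfl, rfl⟩

lemma pow_rpow_comm (x : ℝ) (hx : 0 ≤ x) (N : ℕ) (a : ℝ) :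
    ((x ^ N : ℝ)) ^ a = (x ^ a) ^ N := by
  rw [← Real.rpow_natCast x N, ← Real.rpow_mul hx, mul_comm, Real.rpow_mul hx,
    Real.rpow_natCast]


lemma sq_dom {A d : ℝ} (hA : 0 ≤ A) (hd : 0 ≤ d) (h : 3*A^2 ≤ 4*d^2) : A ≤ 2*d := by
  nlinarith

lemma sq_dom' {Pp A d : ℝ} (hP : 0 < Pp) (hd : 0 ≤ d) (hPA : Pp^2 ≤ A^2) (h : 3*A^2 ≤ 4*d^2) :
    Pp ≤ 2*d := by
  nlinarith

lemma dist_to_vertex {n : ℕ} {x z : E2} (ws : List (Fin 3)) (hlen : ws.length = n)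
    (hz : z ∈ Δ0) (hxe : x = compMap ws z) (i : Fin 3) :
    dist x (compMap ws (vtx i)) ≤ (1/2:ℝ) ^ n := by
  rw [hxe, dist_compMap, hlen, div_pow, one_pow]
  rw [div_le_div_iff_of_pos_right (by positivity : (0:ℝ) < 2 ^ n)]
  exact diam_Δ0 z hz (vtx i) (vtx_mem_Δ0 i)

set_option maxHeartbeats 2000000 in
theorem stmt3 (ε : ℝ) (hε : 0 < ε) (α : ℝ) (hα0 : 0 < α) (hα1 : α < 1)
    (c : ℝ) (hc : 0 < c) (M : ℝ) (f : E2 → ℝ)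
    (hfLip : ∀ x ∈ Sierp, ∀ y ∈ Sierp, |f x - f y| ≤ M * dist x y)
    (hfHol : ∃ c' < c, HolderCond c' α Sierp f) :
    ∃ N : ℕ, ∀ n : ℕ, N ≤ n → ∀ g : E2 → ℝ,
      (∀ ws : List (Fin 3), ws.length = n →
        HolderCond (c / 8) α ((compMap ws '' Δ0) ∩ Sierp) g) →
      (∀ ws : List (Fin 3), ws.length = n → ∀ i : Fin 3,
        g (compMap ws (vtx i)) = f (compMap ws (vtx i))) →
      sSup ((fun x => |g x - f x|) '' Sierp) < ε ∧ ∃ c' < c, HolderCond c' α Sierp g := by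
  obtain ⟨c', hc'c, hc'⟩ := hfHol
  have hα1' : (0:ℝ) < 1 - α := by linarith
  set c₁ := max c' (c/2) with hc1def
  have hc₁c : c₁ < c := max_lt hc'c (by linarith)
  have hc₁2 : c/2 ≤ c₁ := le_max_right _ _
  have hc₁f : HolderCond c₁ α Sierp f := fun x hx y hy =>
    le_trans (hc' x hx y hy)
      (mul_le_mul_of_nonneg_right (le_max_left _ _) (Real.rpow_nonneg dist_nonneg _))
  set θ := c - c₁ with hθdef
  have hθ0 : 0 < θ := by rw [hθdef]; linarith
  have hθc : θ ≤ c/2 := by rw [hθdef]; linarith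
  set Mp := max M 0 with hMdef
  have hMp0 : 0 ≤ Mp := le_max_right _ _
  have hfLip' : ∀ x ∈ Sierp, ∀ y ∈ Sierp, |f x - f y| ≤ Mp * dist x y := fun x hx y hy =>
    le_trans (hfLip x hx y hy) (mul_le_mul_of_nonneg_right (le_max_left _ _) dist_nonneg)
  set B := (c/θ) ^ (1/α : ℝ) with hBdef
  have hcθ2 : (2:ℝ) ≤ c/θ := by rw [le_div_iff₀ hθ0]; linarith
  have hB1 : (1:ℝ) ≤ B := Real.one_le_rpow (by linarith) (by positivity)
  have hB0 : (0:ℝ) < B := by linarith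
  have hBα : B ^ α = c/θ := by
    rw [hBdef, ← Real.rpow_mul (by positivity), one_div, inv_mul_cancel₀ (ne_of_gt hα0),
      Real.rpow_one]
  set ρ1 := ((1/2:ℝ)) ^ (α:ℝ) with hρ1def
  have hρ1pos : 0 < ρ1 := Real.rpow_pos_of_pos (by norm_num) _
  have hρ1lt : ρ1 < 1 := Real.rpow_lt_one (by norm_num) (by norm_num) hα0
  set ρ2 := ((1/2:ℝ)) ^ (1 - α) with hρ2def
  have hρ2pos : 0 < ρ2 := Real.rpow_pos_of_pos (by norm_num) _
  have hρ2lt : ρ2 < 1 := Real.rpow_lt_one (by norm_num) (by norm_num) hα1'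
  obtain ⟨N1, hN1⟩ := exists_pow_lt_of_lt_one
    (show (0:ℝ) < (ε/2)/(c/8 + Mp + 1) by
      apply div_pos (by linarith); linarith) hρ1lt
  obtain ⟨N2, hN2⟩ := exists_pow_lt_of_lt_one
    (show (0:ℝ) < (c/8)/(8*Mp*B + 8) by
      apply div_pos (by linarith)
      linarith [mul_nonneg hMp0 hB0.le]) hρ2lt
  obtain ⟨N3, hN3⟩ := exists_pow_lt_of_lt_one
    (show (0:ℝ) < (θ/2)/(2*Mp + 1) by
      apply div_pos (by linarith); linarith) hρ2lt
  refine ⟨max N1 (max N2 N3), fun n hn g hg hgf => ?_⟩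
  have hρ1n : ρ1 ^ n < (ε/2)/(c/8 + Mp + 1) :=
    lt_of_le_of_lt (pow_le_pow_of_le_one hρ1pos.le hρ1lt.le
      (le_trans (le_max_left _ _) hn)) hN1
  have hρ2n2 : ρ2 ^ n < (c/8)/(8*Mp*B + 8) :=
    lt_of_le_of_lt (pow_le_pow_of_le_one hρ2pos.le hρ2lt.le
      (le_trans (le_trans (le_max_left _ _) (le_max_right _ _)) hn)) hN2
  have hρ2n3 : ρ2 ^ n < (θ/2)/(2*Mp + 1) :=
    lt_of_le_of_lt (pow_le_pow_of_le_one hρ2pos.le hρ2lt.le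
      (le_trans (le_trans (le_max_right _ _) (le_max_right _ _)) hn)) hN3
  have hρ2nn : 0 ≤ ρ2 ^ n := pow_nonneg hρ2pos.le n
  set P : ℝ := (1/2:ℝ)^n with hPdef
  have hP0 : 0 < P := by rw [hPdef]; positivity
  have ePα : (P:ℝ)^α = ρ1^n := pow_rpow_comm _ (by norm_num) _ _
  have ePβ : (P:ℝ)^(1-α) = ρ2^n := pow_rpow_comm _ (by norm_num) _ _
  have hPle : P ≤ ρ1^n := by
    rw [hPdef, hρ1def]
    apply pow_le_pow_left₀ (by norm_num)
    calc (1/2:ℝ) = (1/2:ℝ)^(1:ℝ) := (Real.rpow_one _).symm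
      _ ≤ (1/2:ℝ)^(α:ℝ) := Real.rpow_le_rpow_of_exponent_ge (by norm_num) (by norm_num) hα1.le
  -- the three numerical conditions
  have hC1 : c/8 * P^α + Mp * P ≤ ε/2 := by
    have hK : (0:ℝ) < c/8 + Mp + 1 := by linarith
    have h1 := mul_lt_mul_of_pos_left hρ1n hK
    have h2 : (c/8 + Mp + 1) * ((ε/2)/(c/8 + Mp + 1)) = ε/2 := by
      rw [mul_comm, div_mul_cancel₀ _ (ne_of_gt hK)]
    rw [h2] at h1
    have h3 : Mp * P ≤ Mp * ρ1^n := mul_le_mul_of_nonneg_left hPle hMp0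
    rw [ePα]
    linarith [pow_nonneg hρ1pos.le n, h3]
  have hC2 : 8*Mp*B * ρ2^n ≤ c/8 := by
    have hK : (0:ℝ) < 8*Mp*B + 8 := by linarith [mul_nonneg hMp0 hB0.le]
    have h1 := mul_lt_mul_of_pos_left hρ2n2 hK
    have h2 : (8*Mp*B + 8) * ((c/8)/(8*Mp*B + 8)) = c/8 := by
      rw [mul_comm, div_mul_cancel₀ _ (ne_of_gt hK)]
    rw [h2] at h1
    linarith [hρ2nn]
  have hC3 : 2*Mp * ρ2^n ≤ θ/2 := by
    have hK : (0:ℝ) < 2*Mp + 1 := by linarith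
    have h1 := mul_lt_mul_of_pos_left hρ2n3 hK
    have h2 : (2*Mp + 1) * ((θ/2)/(2*Mp + 1)) = θ/2 := by
      rw [mul_comm, div_mul_cancel₀ _ (ne_of_gt hK)]
    rw [h2] at h1
    linarith [hρ2nn]
  -- deviation bound
  have hdev : ∀ x ∈ Sierp, |g x - f x| ≤ c/8 * P^α + Mp * P := by
    intro x hx
    obtain ⟨ws, z, hlen, hz, hxe⟩ := addr n hx
    set v := compMap ws (vtx 0) with hvdef
    have hxcell : x ∈ compMap ws '' Δ0 := ⟨z, Sierp_sub_Δ0 hz, hxe.symm⟩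
    have hvcell : v ∈ compMap ws '' Δ0 := ⟨vtx 0, vtx_mem_Δ0 0, rfl⟩
    have hvS : v ∈ Sierp := compMap_mem_Sierp ws (vtx_mem_Sierp 0)
    have hdxv : dist x v ≤ P := dist_to_vertex ws hlen (Sierp_sub_Δ0 hz) hxe 0
    have h1 : |g x - g v| ≤ c/8 * dist x v ^ α := hg ws hlen x ⟨hxcell, hx⟩ v ⟨hvcell, hvS⟩
    have h2 : g v = f v := hgf ws hlen 0
    have h3 : |f v - f x| ≤ Mp * dist x v := by
      rw [dist_comm x v]; exact hfLip' v hvS x hx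
    have h4 : dist x v ^ α ≤ P^α := Real.rpow_le_rpow dist_nonneg hdxv hα0.le
    have h5 : |g x - f x| ≤ |g x - g v| + |f v - f x| := by
      have e : g x - f x = (g x - g v) + (f v - f x) := by rw [h2]; ring
      rw [e]; exact abs_add_le _ _
    have h6 : c/8 * dist x v ^ α ≤ c/8 * P^α :=
      mul_le_mul_of_nonneg_left h4 (by linarith)
    have h7 : Mp * dist x v ≤ Mp * P := mul_le_mul_of_nonneg_left hdxv hMp0
    linarith
  have hsup : sSup ((fun x => |g x - f x|) '' Sierp) < ε := by
    have hle : ∀ u ∈ (fun x => |g x - f x|) '' Sierp, u ≤ ε/2 := by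
      rintro u ⟨x, hx, rfl⟩
      exact le_trans (hdev x hx) hC1
    exact lt_of_le_of_lt (Real.sSup_le hle (by linarith)) (by linarith)
  refine ⟨hsup, c - θ/4, by linarith, ?_⟩
  intro x hx y hy
  obtain ⟨ax, x', haxlen, hx', hxe⟩ := addr n hx
  obtain ⟨ay, y', haylen, hy', hye⟩ := addr n hy
  have hxcell : x ∈ compMap ax '' Δ0 := ⟨x', Sierp_sub_Δ0 hx', hxe.symm⟩
  have hycell : y ∈ compMap ay '' Δ0 := ⟨y', Sierp_sub_Δ0 hy', hye.symm⟩
  have hdα : (0:ℝ) ≤ dist x y ^ α := Real.rpow_nonneg dist_nonneg _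
  rcases list_split ax ay (by rw [haxlen, haylen]) with heq | ⟨w, i, j, ru, rv, hij, hwu, hwv⟩
  · have h := hg ax haxlen x ⟨hxcell, hx⟩ y ⟨by rw [heq]; exact hycell, hy⟩
    exact le_trans h (mul_le_mul_of_nonneg_right (by linarith) hdα)
  · set d := dist x y with hddef
    have hd0 : 0 ≤ d := dist_nonneg
    have h2α : (2:ℝ)^(α:ℝ) ≤ 2 := by
      calc (2:ℝ)^(α:ℝ) ≤ (2:ℝ)^(1:ℝ) := Real.rpow_le_rpow_of_exponent_le one_le_two hα1.le
        _ = 2 := Real.rpow_one 2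
    set arel := hmap i (compMap ru x') with harel
    set brel := hmap j (compMap rv y') with hbrel
    have hxw : x = compMap w arel := by
      rw [hxe, hwu, compMap_append, compMap_cons, ← harel]
    have hyw : y = compMap w brel := by
      rw [hye, hwv, compMap_append, compMap_cons, ← hbrel]
    have harelm : arel ∈ hmap i '' Δ0 := ⟨_, compMap_mem_Δ0 ru (Sierp_sub_Δ0 hx'), rfl⟩
    have hbrelm : brel ∈ hmap j '' Δ0 := ⟨_, compMap_mem_Δ0 rv (Sierp_sub_Δ0 hy'), rfl⟩
    set m := compMap w (hmap i (vtx j)) with hmdef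
    have hmS : m ∈ Sierp := compMap_mem_Sierp w (hmap_mem_Sierp i (vtx_mem_Sierp j))
    obtain ⟨hcone1, hcone2⟩ := coneP hij harelm hbrelm
    have hsc2 : (0:ℝ) < (2 ^ w.length)^2 := by positivity
    have edxm : dist x m = dist arel (hmap i (vtx j)) / 2 ^ w.length := by
      rw [hxw, hmdef, dist_compMap]
    have edym : dist y m = dist brel (hmap i (vtx j)) / 2 ^ w.length := by
      rw [hyw, hmdef, dist_compMap]
    have edxy : d = dist arel brel / 2 ^ w.length := by
      rw [hddef, hxw, hyw, dist_compMap]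
    have hconeX : 3 * dist x m ^ 2 ≤ 4 * d ^ 2 := by
      rw [edxm, edxy, div_pow, div_pow, ← mul_div_assoc, ← mul_div_assoc,
        div_le_div_iff_of_pos_right hsc2]
      exact hcone1
    have hconeY : 3 * dist y m ^ 2 ≤ 4 * d ^ 2 := by
      rw [edym, edxy, div_pow, div_pow, ← mul_div_assoc, ← mul_div_assoc,
        div_le_div_iff_of_pos_right hsc2]
      exact hcone2
    by_cases hmm2 : m ∈ compMap ax '' Δ0 ∧ m ∈ compMap ay '' Δ0
    · -- two-hop through the shared vertex
      have h1 := hg ax haxlen x ⟨hxcell, hx⟩ m ⟨hmm2.1, hmS⟩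
      have h2 := hg ay haylen m ⟨hmm2.2, hmS⟩ y ⟨hycell, hy⟩
      have hxm2 : dist x m ≤ 2*d := sq_dom dist_nonneg hd0 hconeX
      have hym2 : dist m y ≤ 2*d := by
        rw [dist_comm m y]
        exact sq_dom dist_nonneg hd0 hconeY
      have hb1 : dist x m ^ α ≤ 2 * d^α := by
        calc dist x m ^ α ≤ (2*d)^α := Real.rpow_le_rpow dist_nonneg hxm2 hα0.le
          _ = (2:ℝ)^(α:ℝ) * d^α := Real.mul_rpow (by norm_num) hd0
          _ ≤ 2 * d^α := mul_le_mul_of_nonneg_right h2α hdα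
      have hb2 : dist m y ^ α ≤ 2 * d^α := by
        calc dist m y ^ α ≤ (2*d)^α := Real.rpow_le_rpow dist_nonneg hym2 hα0.le
          _ = (2:ℝ)^(α:ℝ) * d^α := Real.mul_rpow (by norm_num) hd0
          _ ≤ 2 * d^α := mul_le_mul_of_nonneg_right h2α hdα
      have tri : |g x - g y| ≤ |g x - g m| + |g m - g y| := abs_sub_le _ _ _
      have h1' : c/8 * dist x m ^ α ≤ c/8 * (2*d^α) :=
        mul_le_mul_of_nonneg_left hb1 (by linarith)
      have h2' : c/8 * dist m y ^ α ≤ c/8 * (2*d^α) :=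
        mul_le_mul_of_nonneg_left hb2 (by linarith)
      have hfin : c/2 * d^α ≤ (c - θ/4) * d^α :=
        mul_le_mul_of_nonneg_right (by linarith) hdα
      linarith
    · -- the two level-n cells do not share the midpoint vertex
      have hdlow : P ≤ 2*d := by
        rcases not_and_or.1 hmm2 with hnx | hny
        · have hvnot : vtx j ∉ compMap ru '' Δ0 := by
            intro hvj
            apply hnx
            obtain ⟨z0, hz0, hz0e⟩ := hvj
            refine ⟨z0, hz0, ?_⟩
            rw [hwu, compMap_append, compMap_cons, hz0e, hmdef]
          have hD := lemD j ru hvnot (compMap ru x') ⟨x', Sierp_sub_Δ0 hx', rfl⟩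
          have e1 : dist x m = dist (compMap ru x') (vtx j) / 2 / 2 ^ w.length := by
            rw [edxm, harel, dist_hmap]
          have hlen2 : w.length + 1 + ru.length = n := by
            have h := haxlen
            rw [hwu] at h
            simp [List.length_append] at h
            omega
          have hPxm : P ≤ dist x m := by
            rw [e1, hPdef, ← hlen2]
            have e2 : ((1/2:ℝ))^(w.length + 1 + ru.length)
                = ((1/2:ℝ))^ru.length / 2 / 2^w.length := by
              rw [pow_add, pow_add, pow_one, div_pow, div_pow, one_pow, one_pow]
              ring
            rw [e2]
            gcongr
          have hsq : P^2 ≤ dist x m ^ 2 := pow_le_pow_left₀ hP0.le hPxm 2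
          exact sq_dom' hP0 hd0 hsq hconeX
        · have hvnot : vtx i ∉ compMap rv '' Δ0 := by
            intro hvj
            apply hny
            obtain ⟨z0, hz0, hz0e⟩ := hvj
            refine ⟨z0, hz0, ?_⟩
            rw [hwv, compMap_append, compMap_cons, hz0e, hmdef, hmid i j]
          have hD := lemD i rv hvnot (compMap rv y') ⟨y', Sierp_sub_Δ0 hy', rfl⟩
          have e1 : dist y m = dist (compMap rv y') (vtx i) / 2 / 2 ^ w.length := by
            rw [edym, hbrel, hmid i j, dist_hmap]
          have hlen2 : w.length + 1 + rv.length = n := by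
            have h := haylen
            rw [hwv] at h
            simp [List.length_append] at h
            omega
          have hPym : P ≤ dist y m := by
            rw [e1, hPdef, ← hlen2]
            have e2 : ((1/2:ℝ))^(w.length + 1 + rv.length)
                = ((1/2:ℝ))^rv.length / 2 / 2^w.length := by
              rw [pow_add, pow_add, pow_one, div_pow, div_pow, one_pow, one_pow]
              ring
            rw [e2]
            gcongr
          have hsq : P^2 ≤ dist y m ^ 2 := pow_le_pow_left₀ hP0.le hPym 2
          exact sq_dom' hP0 hd0 hsq hconeY
      rcases le_or_gt d (B * P) with hsmall | hbig
      · -- d comparable to the mesh: three-hop through lattice vertices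
        set vx := compMap ax (vtx 0) with hvxdef
        set vy := compMap ay (vtx 0) with hvydef
        have hvxS : vx ∈ Sierp := compMap_mem_Sierp _ (vtx_mem_Sierp 0)
        have hvyS : vy ∈ Sierp := compMap_mem_Sierp _ (vtx_mem_Sierp 0)
        have hvxcell : vx ∈ compMap ax '' Δ0 := ⟨vtx 0, vtx_mem_Δ0 0, rfl⟩
        have hvycell : vy ∈ compMap ay '' Δ0 := ⟨vtx 0, vtx_mem_Δ0 0, rfl⟩
        have hdxvx : dist x vx ≤ P := dist_to_vertex ax haxlen (Sierp_sub_Δ0 hx') hxe 0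
        have hdyvy : dist y vy ≤ P := dist_to_vertex ay haylen (Sierp_sub_Δ0 hy') hye 0
        have h1 := hg ax haxlen x ⟨hxcell, hx⟩ vx ⟨hvxcell, hvxS⟩
        have h2 := hg ay haylen vy ⟨hvycell, hvyS⟩ y ⟨hycell, hy⟩
        have hgvx : g vx = f vx := hgf ax haxlen 0
        have hgvy : g vy = f vy := hgf ay haylen 0
        have hfj : |f vx - f vy| ≤ Mp * (5*d) := by
          have htri : dist vx vy ≤ dist vx x + dist x y + dist y vy := dist_triangle4 _ _ _ _
          have e1 : dist vx x = dist x vx := dist_comm _ _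
          have h5 : dist vx vy ≤ 5 * d := by
            rw [← hddef] at htri
            linarith [hdlow, hdxvx, hdyvy, htri, e1]
          exact le_trans (hfLip' vx hvxS vy hvyS) (mul_le_mul_of_nonneg_left h5 hMp0)
        have hPα2d : P^α ≤ 2 * d^α := by
          calc P^α ≤ (2*d)^α := Real.rpow_le_rpow hP0.le hdlow hα0.le
            _ = (2:ℝ)^(α:ℝ) * d^α := Real.mul_rpow (by norm_num) hd0
            _ ≤ 2 * d^α := mul_le_mul_of_nonneg_right h2α hdα
        have hhop1 : |g x - g vx| ≤ c/8 * (2*d^α) := by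
          refine le_trans h1 ?_
          have ha := Real.rpow_le_rpow dist_nonneg hdxvx hα0.le
          have := le_trans ha hPα2d
          exact mul_le_mul_of_nonneg_left this (by linarith)
        have hhop2 : |g vy - g y| ≤ c/8 * (2*d^α) := by
          refine le_trans h2 ?_
          have e2 : dist vy y = dist y vy := dist_comm _ _
          have ha : dist vy y ^ α ≤ P ^ α := by
            rw [e2]; exact Real.rpow_le_rpow dist_nonneg hdyvy hα0.le
          have := le_trans ha hPα2d
          exact mul_le_mul_of_nonneg_left this (by linarith)
        have hMd : Mp * (5*d) ≤ c/8 * d^α := by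
          have hd1 : d^(1-α) ≤ (B*P)^(1-α) := Real.rpow_le_rpow hd0 hsmall (by linarith)
          have hd2 : (B*P)^(1-α) = B^(1-α) * P^(1-α) := Real.mul_rpow hB0.le hP0.le
          have hd3 : B^(1-α) ≤ B := by
            calc B^(1-α) ≤ B^(1:ℝ) := Real.rpow_le_rpow_of_exponent_le hB1 (by linarith)
              _ = B := Real.rpow_one B
          have hd4 : d = d^(1-α) * d^α := by
            calc d = d^(1:ℝ) := (Real.rpow_one d).symm
              _ = d^((1-α)+α) := by rw [show (1-α)+α = (1:ℝ) by ring]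
              _ = d^(1-α) * d^α := Real.rpow_add' hd0 (by rw [show (1-α)+α = (1:ℝ) by ring]; norm_num)
          have hd5 : d^(1-α) ≤ B * ρ2^n := by
            rw [← ePβ]
            calc d^(1-α) ≤ B^(1-α) * P^(1-α) := by rw [← hd2]; exact hd1
              _ ≤ B * P^(1-α) := mul_le_mul_of_nonneg_right hd3 (Real.rpow_nonneg hP0.le _)
          have h6 : Mp * d^(1-α) ≤ Mp * (B*ρ2^n) := mul_le_mul_of_nonneg_left hd5 hMp0
          calc Mp * (5*d) = 5 * (Mp * d^(1-α)) * d^α := by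
                conv_lhs => rw [hd4]
                ring
            _ ≤ 5 * (Mp*(B*ρ2^n)) * d^α := by
                apply mul_le_mul_of_nonneg_right _ hdα
                linarith
            _ ≤ c/8 * d^α := by
                apply mul_le_mul_of_nonneg_right _ hdα
                linarith [hC2, mul_nonneg (mul_nonneg hMp0 hB0.le) hρ2nn]
        have tri2 : |g x - g y| ≤ |g x - g vx| + |f vx - f vy| + |g vy - g y| := by
          have e : g x - g y = (g x - g vx) + (f vx - f vy) + (g vy - g y) := by
            rw [hgvx, hgvy]; ring
          calc |g x - g y| = |(g x - g vx) + (f vx - f vy) + (g vy - g y)| := by rw [e]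
            _ ≤ _ := abs_add_three _ _ _
        have hfin : c/8*(2*d^α) + c/8*d^α + c/8*(2*d^α) ≤ (c - θ/4)*d^α := by
          have h7 : c/8*2 + c/8 + c/8*2 ≤ c - θ/4 := by linarith
          linarith [mul_le_mul_of_nonneg_right h7 hdα]
        linarith
      · -- d large compared to the mesh: compare with f
        have hxfd := hdev x hx
        have hyfd := hdev y hy
        have hffd := hc₁f x hx y hy
        rw [← hddef] at hffd
        have tri2 : |g x - g y| ≤ |g x - f x| + |f x - f y| + |g y - f y| := by
          have e : g x - g y = (g x - f x) + (f x - f y) + (f y - g y) := by ring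
          calc |g x - g y| = |(g x - f x) + (f x - f y) + (f y - g y)| := by rw [e]
            _ ≤ |g x - f x| + |f x - f y| + |f y - g y| := abs_add_three _ _ _
            _ = |g x - f x| + |f x - f y| + |g y - f y| := by rw [abs_sub_comm (f y)]
        have hPd : P ≤ d/B := by
          rw [le_div_iff₀ hB0]
          linarith [mul_comm P B ▸ hbig]
        have hPαd : P^α ≤ d^α * (θ/c) := by
          have ha : P^α ≤ (d/B)^α := Real.rpow_le_rpow hP0.le hPd hα0.le
          have hb : (d/B)^α = d^α / (c/θ) := by rw [Real.div_rpow hd0 hB0.le, hBα]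
          rw [hb] at ha
          have hcc : d^α / (c/θ) = d^α * (θ/c) := by
            field_simp
          rw [hcc] at ha
          exact ha
        have hPαd' : P^α ≤ d^α := by
          have ha : d/B ≤ d := div_le_self hd0 hB1
          exact Real.rpow_le_rpow hP0.le (le_trans hPd ha) hα0.le
        have hPsplit : P = ρ2^n * P^α := by
          calc P = P^(1:ℝ) := (Real.rpow_one P).symm
            _ = P^((1-α)+α) := by rw [show (1-α)+α = (1:ℝ) by ring]
            _ = P^(1-α) * P^α := Real.rpow_add hP0 _ _
            _ = ρ2^n * P^α := by rw [ePβ]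
        have hMpP : Mp * P ≤ θ/4 * d^α := by
          have ha : Mp * ρ2^n ≤ θ/4 := by linarith [hC3]
          calc Mp * P = (Mp * ρ2^n) * P^α := by
                conv_lhs => rw [hPsplit]
                ring
            _ ≤ (θ/4) * d^α := by
                apply mul_le_mul ha hPαd' (Real.rpow_nonneg hP0.le _) (by linarith)
        have hc8Pα : c/8 * P^α ≤ θ/8 * d^α := by
          calc c/8 * P^α ≤ c/8 * (d^α*(θ/c)) := mul_le_mul_of_nonneg_left hPαd (by linarith)
            _ = θ/8 * d^α := by field_simp
        have hkey : c₁ + 3*θ/4 = c - θ/4 := by rw [hθdef]; ring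
        linarith
end
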